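/- For every N ≥ 2, 2∫_0^∞∫_0^x p_x p_{x'}^{1-1/N} dx' dx − E[X]^2 ≤ (1/N)(2∫_0^∞ x p_x dx − E[X]^2), i.e., N·Var(m̂) + E[X]^2 ≤ N·Var(m̂_MC) + E[X]^2 where m̂_MC is the Monte Carlo mean of N iid copies of X. Hence Var(m̂) ≤ Var(m̂_MC). -/

import Mathlib

open MeasureTheory Set
open scoped ENNReal

private lemma aux_mono (q : ℝ → ℝ≥0∞) :
    Measurable (fun x : ℝ => ∫⁻ y in Ioo (0:ℝ) x, q y) :=
  Monotone.measurable (fun _ _ hab => lintegral_mono_set (Ioo_subset_Ioo_right hab))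

private lemma aux_sym (q : ℝ → ℝ≥0∞) (hq : Measurable q) :
    (∫⁻ x in Ioi (0:ℝ), q x) ^ 2
      = 2 * ∫⁻ x in Ioi (0:ℝ), q x * ∫⁻ y in Ioo (0:ℝ) x, q y := by
  have hIq := aux_mono q
  have hsplit : ∀ x : ℝ, 0 < x →
      (∫⁻ y in Ioi (0:ℝ), q y) = (∫⁻ y in Ioo (0:ℝ) x, q y) + ∫⁻ y in Ioi x, q y := by
    intro x hx
    rw [← lintegral_union measurableSet_Ioi
        (by rw [Set.disjoint_left]; intro y hy hy'; exact lt_asymm hy.2 hy')]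
    apply setLIntegral_congr
    have hx0 : (volume : Measure ℝ) {x} = 0 := measure_singleton x
    rw [Filter.eventuallyEq_set]
    filter_upwards [measure_eq_zero_iff_ae_notMem.mp hx0] with y hy
    simp only [mem_Ioi, mem_union, mem_Ioo, mem_singleton_iff] at *
    constructor
    · intro h0
      rcases lt_or_gt_of_ne (fun h : y = x => hy h) with h | h
      · exact Or.inl ⟨h0, h⟩
      · exact Or.inr h
    · rintro (⟨h0, _⟩ | h)
      · exact h0
      · exact hx.trans h
  set G : ℝ × ℝ → ℝ≥0∞ := fun z => ({w : ℝ × ℝ | w.1 < w.2}).indicator (fun w => q w.1 * q w.2) z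
    with hG_def
  have hGm : Measurable G :=
    ((hq.comp measurable_fst).mul (hq.comp measurable_snd)).indicator
      (measurableSet_lt measurable_fst measurable_snd)
  have h1 : ∀ x : ℝ, 0 < x → (∫⁻ y in Ioi x, q x * q y) = ∫⁻ y in Ioi (0:ℝ), G (x, y) := by
    intro x hx
    have he : (fun y => G (x, y)) = (Ioi x).indicator (fun y => q x * q y) := by
      funext y
      by_cases h : x < y <;> simp [hG_def, Set.indicator, h]
    rw [he, lintegral_indicator measurableSet_Ioi, Measure.restrict_restrict measurableSet_Ioi,
      Set.inter_eq_left.2 (Ioi_subset_Ioi hx.le)]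
  have h2 : ∀ y : ℝ, 0 < y → (∫⁻ x in Ioi (0:ℝ), G (x, y)) = ∫⁻ x in Ioo (0:ℝ) y, q x * q y := by
    intro y hy
    have he : (fun x => G (x, y)) = (Iio y).indicator (fun x => q x * q y) := by
      funext x
      by_cases h : x < y <;> simp [hG_def, Set.indicator, h]
    rw [he, lintegral_indicator measurableSet_Iio, Measure.restrict_restrict measurableSet_Iio,
      Set.inter_comm, Set.Ioi_inter_Iio]
  have hswap : (∫⁻ x in Ioi (0:ℝ), q x * ∫⁻ y in Ioi x, q y)
      = ∫⁻ x in Ioi (0:ℝ), q x * ∫⁻ y in Ioo (0:ℝ) x, q y := by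
    calc ∫⁻ x in Ioi (0:ℝ), q x * ∫⁻ y in Ioi x, q y
        = ∫⁻ x in Ioi (0:ℝ), ∫⁻ y in Ioi (0:ℝ), G (x, y) := by
          refine setLIntegral_congr_fun measurableSet_Ioi
            (fun x hx => ?_)
          rw [← h1 x hx, lintegral_const_mul _ hq]
      _ = ∫⁻ y in Ioi (0:ℝ), ∫⁻ x in Ioi (0:ℝ), G (x, y) :=
          lintegral_lintegral_swap hGm.aemeasurable
      _ = ∫⁻ y in Ioi (0:ℝ), ∫⁻ x in Ioo (0:ℝ) y, q x * q y := by
          exact setLIntegral_congr_fun measurableSet_Ioi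
            (fun y hy => h2 y hy)
      _ = ∫⁻ x in Ioi (0:ℝ), q x * ∫⁻ y in Ioo (0:ℝ) x, q y := by
          refine setLIntegral_congr_fun measurableSet_Ioi
            (fun a _ => ?_)
          rw [lintegral_mul_const _ hq, mul_comm]
  calc (∫⁻ x in Ioi (0:ℝ), q x) ^ 2
      = ∫⁻ x in Ioi (0:ℝ), q x * ∫⁻ y in Ioi (0:ℝ), q y := by
        rw [sq, ← lintegral_mul_const _ hq]
    _ = ∫⁻ x in Ioi (0:ℝ), ((q x * ∫⁻ y in Ioo (0:ℝ) x, q y) + q x * ∫⁻ y in Ioi x, q y) := by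
        refine setLIntegral_congr_fun measurableSet_Ioi
          (fun x hx => ?_)
        rw [hsplit x hx, mul_add]
    _ = (∫⁻ x in Ioi (0:ℝ), q x * ∫⁻ y in Ioo (0:ℝ) x, q y)
          + ∫⁻ x in Ioi (0:ℝ), q x * ∫⁻ y in Ioi x, q y :=
        lintegral_add_left (hq.mul hIq) _
    _ = 2 * ∫⁻ x in Ioi (0:ℝ), q x * ∫⁻ y in Ioo (0:ℝ) x, q y := by
        rw [hswap, two_mul]

private lemma aux_sum (q r : ℝ → ℝ≥0∞) (hq : Measurable q) (hr : Measurable r)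
    (hqr : ∀ x, q x + r x = 1) :
    (∫⁻ x in Ioi (0:ℝ), q x * ∫⁻ y in Ioo (0:ℝ) x, q y)
      + (∫⁻ x in Ioi (0:ℝ), q x * ∫⁻ y in Ioo (0:ℝ) x, r y)
    = ∫⁻ x in Ioi (0:ℝ), ENNReal.ofReal x * q x := by
  rw [← lintegral_add_left (f := fun x => q x * ∫⁻ y in Ioo (0:ℝ) x, q y) (hq.mul (aux_mono q))]
  refine setLIntegral_congr_fun measurableSet_Ioi
    (fun x hx => ?_)
  rw [← mul_add, ← lintegral_add_left hq]
  have h1 : ∫⁻ y in Ioo (0:ℝ) x, (q y + r y) = ENNReal.ofReal x := by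
    rw [setLIntegral_congr_fun measurableSet_Ioo
      (fun y _ => hqr y)]
    simp [Real.volume_Ioo]
  rw [h1, mul_comm]

private lemma aux_ptwise (a b : ℝ) (ha0 : 0 ≤ a) (hb0 : 0 ≤ b) (hb1 : b ≤ 1)
    (N : ℕ) (hN : 2 ≤ N) :
    ENNReal.ofReal (a * b ^ (1 - 1/(N:ℝ)))
      ≤ ENNReal.ofReal a * ENNReal.ofReal b
        + ENNReal.ofReal a * ENNReal.ofReal (1 - b) * (N:ℝ≥0∞)⁻¹ := by
  have hN0 : (0:ℝ) < N := by positivity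
  have hN1 : (1:ℝ) ≤ N := by exact_mod_cast Nat.one_le_of_lt hN
  have hw1 : (0:ℝ) ≤ 1 - 1/(N:ℝ) := by
    have : 1/(N:ℝ) ≤ 1 := by rw [div_le_one hN0]; exact hN1
    linarith
  have key : b ^ (1 - 1/(N:ℝ)) ≤ b + (1 - b)/N := by
    have h := Real.geom_mean_le_arith_mean2_weighted (w₂ := 1/(N:ℝ)) hw1 (by positivity) hb0 zero_le_one
      (by ring)
    rw [Real.one_rpow, mul_one] at h
    calc b ^ (1 - 1/(N:ℝ)) ≤ (1 - 1/(N:ℝ)) * b + (1/(N:ℝ)) * 1 := h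
      _ = b + (1 - b)/N := by field_simp; ring
  have key2 : a * b ^ (1 - 1/(N:ℝ)) ≤ a * b + a * (1 - b) / N := by
    calc a * b ^ (1 - 1/(N:ℝ)) ≤ a * (b + (1 - b)/N) := mul_le_mul_of_nonneg_left key ha0
      _ = a * b + a * (1 - b)/N := by ring
  calc ENNReal.ofReal (a * b ^ (1 - 1/(N:ℝ))) ≤ ENNReal.ofReal (a * b + a * (1 - b)/N) :=
        ENNReal.ofReal_le_ofReal key2
    _ = ENNReal.ofReal a * ENNReal.ofReal b
        + ENNReal.ofReal a * ENNReal.ofReal (1 - b) * (N:ℝ≥0∞)⁻¹ := by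
      rw [ENNReal.ofReal_add (mul_nonneg ha0 hb0)
          (div_nonneg (mul_nonneg ha0 (by linarith)) hN0.le),
        ENNReal.ofReal_mul ha0, ENNReal.ofReal_div_of_pos hN0, ENNReal.ofReal_mul ha0,
        ENNReal.ofReal_natCast, div_eq_mul_inv]

/-- For every `N ≥ 2`, `2∫_0^∞∫_0^x p_x p_{x'}^{1-1/N} dx' dx − E[X]²
≤ (1/N)(2∫_0^∞ x p_x dx − E[X]²)`, where `E[X] = ∫_0^∞ p_x dx` and
`E[X²] = 2∫_0^∞ x p_x dx`: that is, `Var(m̂) ≤ Var(m̂_MC)`, the variance of the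
Monte Carlo mean of `N` iid copies of `X`. -/
theorem stmt_8 (p : ℝ → ℝ) (hp0 : ∀ x, 0 ≤ p x) (hp1 : ∀ x, p x ≤ 1) (hmono : Antitone p)
    (N : ℕ) (hN : 2 ≤ N) :
    2 * (∫⁻ x in Ioi (0:ℝ), ∫⁻ y in Ioo (0:ℝ) x,
          ENNReal.ofReal (p x * p y ^ (1 - 1/(N:ℝ))))
        - (∫⁻ x in Ioi (0:ℝ), ENNReal.ofReal (p x)) ^ 2
      ≤ (2 * (∫⁻ x in Ioi (0:ℝ), ENNReal.ofReal x * ENNReal.ofReal (p x))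
          - (∫⁻ x in Ioi (0:ℝ), ENNReal.ofReal (p x)) ^ 2) / (N : ℝ≥0∞) := by
  have hpm : Measurable p := hmono.measurable
  have hq : Measurable fun x => ENNReal.ofReal (p x) := ENNReal.measurable_ofReal.comp hpm
  have hr : Measurable fun x => ENNReal.ofReal (1 - p x) :=
    ENNReal.measurable_ofReal.comp (measurable_const.sub hpm)
  have hqr : ∀ x, ENNReal.ofReal (p x) + ENNReal.ofReal (1 - p x) = 1 := fun x => by
    rw [← ENNReal.ofReal_add (hp0 x) (by linarith [hp1 x])]; simp
  set B := ∫⁻ x in Ioi (0:ℝ), ENNReal.ofReal (p x) * ∫⁻ y in Ioo (0:ℝ) x, ENNReal.ofReal (p y)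
    with hB
  set D := ∫⁻ x in Ioi (0:ℝ), ENNReal.ofReal (p x) * ∫⁻ y in Ioo (0:ℝ) x, ENNReal.ofReal (1 - p y)
    with hD
  have hm2 : (∫⁻ x in Ioi (0:ℝ), ENNReal.ofReal (p x)) ^ 2 = 2 * B := aux_sym _ hq
  have hBD : B + D = ∫⁻ x in Ioi (0:ℝ), ENNReal.ofReal x * ENNReal.ofReal (p x) :=
    aux_sum _ _ hq hr hqr
  have hA : (∫⁻ x in Ioi (0:ℝ), ∫⁻ y in Ioo (0:ℝ) x,
        ENNReal.ofReal (p x * p y ^ (1 - 1/(N:ℝ))))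
      ≤ B + D * (N:ℝ≥0∞)⁻¹ := by
    calc (∫⁻ x in Ioi (0:ℝ), ∫⁻ y in Ioo (0:ℝ) x,
          ENNReal.ofReal (p x * p y ^ (1 - 1/(N:ℝ))))
        ≤ ∫⁻ x in Ioi (0:ℝ),
            ((ENNReal.ofReal (p x) * ∫⁻ y in Ioo (0:ℝ) x, ENNReal.ofReal (p y))
            + (ENNReal.ofReal (p x) * ∫⁻ y in Ioo (0:ℝ) x, ENNReal.ofReal (1 - p y))
              * (N:ℝ≥0∞)⁻¹) := by
          refine lintegral_mono fun x => ?_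
          calc ∫⁻ y in Ioo (0:ℝ) x, ENNReal.ofReal (p x * p y ^ (1 - 1/(N:ℝ)))
              ≤ ∫⁻ y in Ioo (0:ℝ) x, (ENNReal.ofReal (p x) * ENNReal.ofReal (p y)
                  + ENNReal.ofReal (p x) * ENNReal.ofReal (1 - p y) * (N:ℝ≥0∞)⁻¹) :=
                lintegral_mono fun y => aux_ptwise _ _ (hp0 x) (hp0 y) (hp1 y) N hN
            _ = _ := by
                rw [lintegral_add_left (hq.const_mul _),
                  lintegral_mul_const _ (hr.const_mul _),
                  lintegral_const_mul _ hq, lintegral_const_mul _ hr]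
      _ = B + D * (N:ℝ≥0∞)⁻¹ := by
          rw [lintegral_add_left (f := fun x => ENNReal.ofReal (p x) * ∫⁻ y in Ioo (0:ℝ) x, ENNReal.ofReal (p y)) (hq.mul (aux_mono _)),
            lintegral_mul_const _ (f := fun x => ENNReal.ofReal (p x) * ∫⁻ y in Ioo (0:ℝ) x, ENNReal.ofReal (1 - p y)) (hq.mul (aux_mono _))]
  rw [hm2, ← hBD]
  rcases eq_or_ne B ⊤ with hBt | hBt
  · have h1 : (2:ℝ≥0∞) * B = ⊤ := by simp [hBt]
    rw [h1, tsub_eq_zero_of_le le_top]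
    exact zero_le
  · have h2B : (2:ℝ≥0∞) * B ≠ ⊤ := ENNReal.mul_ne_top (by simp) hBt
    rw [mul_add 2 B D, ENNReal.add_sub_cancel_left h2B, tsub_le_iff_right]
    calc 2 * (∫⁻ x in Ioi (0:ℝ), ∫⁻ y in Ioo (0:ℝ) x,
          ENNReal.ofReal (p x * p y ^ (1 - 1/(N:ℝ))))
        ≤ 2 * (B + D * (N:ℝ≥0∞)⁻¹) := mul_le_mul_right hA 2
      _ = 2 * D / (N:ℝ≥0∞) + 2 * B := by
          rw [mul_add, div_eq_mul_inv, add_comm, mul_assoc]
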